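/- At null infinity J with Λ = 0, in the divergence-free conformal gauge (κ̲ = 0, hence f = ν = 0), the transport equation for the leaf scalar curvature reduces to £_N R̲ = 0; that is, all leaves of the foliation of J are isometric in the sense that the 2-dimensional scalar curvature is constant along the null generators. -/
import Mathlib


/-! Fields on (a coordinate patch of) null infinity `J`, a 3-dimensional
hypersurface; the first two coordinates are coordinates on the leaves of the
foliation, so leaf covariant derivatives `∇̲_M` use directions `M : Fin 2`. -/

/-- Partial derivative along the `M`-th leaf coordinate direction. -/
noncomputable def pdL (M : Fin 2) (f : (Fin 3 → ℝ) → ℝ) (x : Fin 3 → ℝ) : ℝ :=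
  fderiv ℝ f x (Pi.single M.castSucc 1)

/-- At null infinity with `Λ = 0`, in the divergence-free conformal gauge
(`κ̲ = 0`), the Bianchi-derived transport equation
`£_N R̲ + (κ̲/2)R̲ + κ̲(£_Nθ̲ + (κ̲/2)θ̲) - 2κ̲£_ℓf + Δ̲κ̲
 - 2∇̲_Mκ̲ ∇̲^M ln Ḟ = 0`
reduces to `£_N R̲ = 0`: all leaves are isometric in the sense that the
2-dimensional scalar curvature is constant along the null generators. -/
theorem stmt_18
    (minv : (Fin 3 → ℝ) → Matrix (Fin 2) (Fin 2) ℝ)   -- inverse leaf metric m̲^{MN}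
    (Γ2 : (Fin 3 → ℝ) → Fin 2 → Fin 2 → Fin 2 → ℝ)     -- leaf Christoffel symbols
    (κ R LieR Lieθ θ Lℓf lnFdot : (Fin 3 → ℝ) → ℝ)
    (hTransport : ∀ x, LieR x + (κ x / 2) * R x
      + κ x * (Lieθ x + (κ x / 2) * θ x) - 2 * κ x * Lℓf x
      + (∑ M, ∑ N, minv x M N *
          (pdL M (fun y => pdL N κ y) x - ∑ P, Γ2 x P M N * pdL P κ x))
      - 2 * (∑ M, ∑ N, minv x M N * pdL M κ x * pdL N lnFdot x) = 0)
    (hgauge : ∀ x, κ x = 0) :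
    ∀ x, LieR x = 0 := by
  have hκ : κ = fun _ => (0:ℝ) := funext hgauge
  intro x
  have h := hTransport x
  simp only [hκ] at h
  simp [pdL] at h
  linarith
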